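/- For every y ∈ A, the limit as x → y (x ∈ A, x ≠ y) of −log|x − y| − G_A(x, y) exists and equals R_A(y) := −(log|y| − log b)²/log(a/b) − log b + Σ_{m=1}^∞ (1/m)·(|y|^{2m} − 2a^{2m} + (ab)^{2m}|y|^{−2m})/(b^{2m} − a^{2m}). -/

import Mathlib

/-- The coefficient `A_0(y)` of the Green function of the annulus `{a < |x| < b}`,
as a function of `s = |y|`. -/
noncomputable def A0 (a b s : ℝ) : ℝ := Real.log b * (Real.log (a / s) / Real.log (a / b))

/-- The coefficient `B_0(y)`, as a function of `s = |y|`. -/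
noncomputable def B0 (a b s : ℝ) : ℝ := Real.log (s / b) / Real.log (a / b)

/-- The Fourier coefficient `A_m(y)`, as a function of `s = |y|`. -/
noncomputable def Acoef (a b s : ℝ) (m : ℕ) : ℝ :=
  (s ^ m - (a ^ 2 / s) ^ m) / (b ^ (2 * m) - a ^ (2 * m))

/-- The Fourier coefficient `B_m(y)`, as a function of `s = |y|`. -/
noncomputable def Bcoef (a b s : ℝ) (m : ℕ) : ℝ :=
  a ^ (2 * m) * ((b ^ 2 / s) ^ m - s ^ m) / (b ^ (2 * m) - a ^ (2 * m))

/-- The Green function `G_A(x, y)` of the annulus `A = {a < |x| < b}`, the plane being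
identified with `ℂ`; the pole is `y = s e^{iα}` and `x ∈ ℂ`.  For `x = r e^{iθ}` one has
`|x|^m cos m(θ - α) = Re (x^m e^{-imα})` and `|x|^{-m} cos m(θ - α) = Re (x^{-m} e^{imα})`,
so this is the series `-log|x-y| + A_0(y) + B_0(y) log|x|
- Σ_{m≥1} (1/m)(A_m(y)|x|^m + B_m(y)|x|^{-m}) cos m(θ - α)`. -/
noncomputable def GA (a b s α : ℝ) (x : ℂ) : ℝ :=
  -Real.log (‖x - s * Complex.exp (α * Complex.I)‖)
  + A0 a b s + B0 a b s * Real.log ‖x‖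
  - ∑' m : ℕ, (1 / (m + 1 : ℝ)) *
      (Acoef a b s (m + 1) * (x ^ (m + 1) * Complex.exp (-((m + 1 : ℝ) * α) * Complex.I)).re
      + Bcoef a b s (m + 1) * (x ^ (-(m + 1 : ℤ)) * Complex.exp (((m + 1 : ℝ) * α) * Complex.I)).re)

/-- The Robin function of the annulus `A = {a < |x| < b}` at a point of modulus `s`. -/
noncomputable def RA (a b s : ℝ) : ℝ :=
  -(Real.log s - Real.log b) ^ 2 / Real.log (a / b) - Real.log b
  + ∑' m : ℕ, (1 / (m + 1 : ℝ)) *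
      ((s ^ (2 * (m + 1)) - 2 * a ^ (2 * (m + 1)) + (a * b) ^ (2 * (m + 1)) *
        (s ^ (2 * (m + 1)))⁻¹) / (b ^ (2 * (m + 1)) - a ^ (2 * (m + 1))))

/-- The general term of the Fourier series in `GA`. -/
noncomputable def Fterm (a b s α : ℝ) (m : ℕ) (x : ℂ) : ℝ :=
  (1 / (m + 1 : ℝ)) *
      (Acoef a b s (m + 1) * (x ^ (m + 1) * Complex.exp (-((m + 1 : ℝ) * α) * Complex.I)).re
      + Bcoef a b s (m + 1) * (x ^ (-(m + 1 : ℤ)) * Complex.exp (((m + 1 : ℝ) * α) * Complex.I)).re)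

lemma GA_eq (a b s α : ℝ) (x : ℂ) :
    GA a b s α x =
      -Real.log (‖x - s * Complex.exp (α * Complex.I)‖)
      + A0 a b s + B0 a b s * Real.log ‖x‖
      - ∑' m : ℕ, Fterm a b s α m x := rfl

lemma pole_pow (m : ℕ) (s α : ℝ) :
    ((s : ℂ) * Complex.exp (α * Complex.I)) ^ (m + 1)
      = ((s ^ (m + 1) : ℝ) : ℂ) * Complex.exp (((m + 1 : ℝ) : ℂ) * α * Complex.I) := by
  rw [mul_pow, ← Complex.exp_nat_mul, Complex.ofReal_pow]
  congr 2
  push_cast; ring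

lemma pole_re_pos (m : ℕ) (s α : ℝ) :
    ((((s : ℂ) * Complex.exp (α * Complex.I))) ^ (m + 1)
      * Complex.exp (-((m + 1 : ℝ) * α) * Complex.I)).re = s ^ (m + 1) := by
  rw [pole_pow, mul_assoc, ← Complex.exp_add]
  have h : ((m + 1 : ℝ) : ℂ) * α * Complex.I + -((m + 1 : ℝ) * α) * Complex.I = 0 := by
    push_cast; ring
  rw [h, Complex.exp_zero, mul_one, Complex.ofReal_re]

lemma pole_re_neg (m : ℕ) (s α : ℝ) :
    ((((s : ℂ) * Complex.exp (α * Complex.I))) ^ (-(m + 1 : ℤ))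
      * Complex.exp (((m + 1 : ℝ) * α) * Complex.I)).re = (s ^ (m + 1))⁻¹ := by
  have hz : ((s : ℂ) * Complex.exp (α * Complex.I)) ^ (-(m + 1 : ℤ))
      = (((s : ℂ) * Complex.exp (α * Complex.I)) ^ (m + 1))⁻¹ := by
    rw [zpow_neg]; norm_cast
  have harg : ((m + 1 : ℝ) * α : ℂ) = ((m + 1 : ℝ) : ℂ) * α := by push_cast; ring
  rw [hz, pole_pow, mul_inv, mul_assoc, harg, inv_mul_cancel₀ (Complex.exp_ne_zero _), mul_one,
    ← Complex.ofReal_inv, Complex.ofReal_re]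

lemma re_pos_bound (m : ℕ) (α : ℝ) (x : ℂ) :
    |(x ^ (m + 1) * Complex.exp (-((m + 1 : ℝ) * α) * Complex.I)).re|
      ≤ ‖x‖ ^ (m + 1) := by
  calc |(x ^ (m + 1) * Complex.exp (-((m + 1 : ℝ) * α) * Complex.I)).re|
      ≤ ‖x ^ (m + 1) * Complex.exp (-((m + 1 : ℝ) * α) * Complex.I)‖ :=
        Complex.abs_re_le_norm _
    _ = ‖x‖ ^ (m + 1) := by
        rw [norm_mul, norm_pow]
        simp [Complex.norm_exp]

lemma re_neg_bound (m : ℕ) (α : ℝ) (x : ℂ) :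
    |(x ^ (-(m + 1 : ℤ)) * Complex.exp (((m + 1 : ℝ) * α) * Complex.I)).re|
      ≤ (‖x‖ ^ (m + 1))⁻¹ := by
  calc |(x ^ (-(m + 1 : ℤ)) * Complex.exp (((m + 1 : ℝ) * α) * Complex.I)).re|
      ≤ ‖x ^ (-(m + 1 : ℤ)) * Complex.exp (((m + 1 : ℝ) * α) * Complex.I)‖ :=
        Complex.abs_re_le_norm _
    _ = (‖x‖ ^ (m + 1))⁻¹ := by
        rw [norm_mul, norm_zpow, zpow_neg]
        simp [Complex.norm_exp]
        norm_cast

lemma geom_eq_one (a b s r₂ : ℝ) (hb : b ≠ 0) (hba : b ^ 2 - a ^ 2 ≠ 0) (m : ℕ) :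
    s ^ (m + 1) / (b ^ (2 * m) * (b ^ 2 - a ^ 2)) * r₂ ^ (m + 1)
      = b ^ 2 / (b ^ 2 - a ^ 2) * (s * r₂ / b ^ 2) ^ (m + 1) := by
  rw [div_pow, show (b ^ 2) ^ (m + 1) = b ^ (2 * (m + 1)) from by ring]
  field_simp
  ring

lemma geom_eq_two (a b s r₁ : ℝ) (hb : b ≠ 0) (hs : s ≠ 0) (hr : r₁ ≠ 0)
    (hba : b ^ 2 - a ^ 2 ≠ 0) (m : ℕ) :
    (a ^ 2 * b ^ 2 / s) ^ (m + 1) / (b ^ (2 * m) * (b ^ 2 - a ^ 2)) * (r₁ ^ (m + 1))⁻¹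
      = b ^ 2 / (b ^ 2 - a ^ 2) * (a ^ 2 / (s * r₁)) ^ (m + 1) := by
  rw [div_pow, div_pow]
  field_simp
  ring

lemma term_value (a b s : ℝ) (m : ℕ) (hs : s ≠ 0)
    (hD : b ^ (2 * (m + 1)) - a ^ (2 * (m + 1)) ≠ 0) :
    Acoef a b s (m + 1) * s ^ (m + 1) + Bcoef a b s (m + 1) * (s ^ (m + 1))⁻¹
      = (s ^ (2 * (m + 1)) - 2 * a ^ (2 * (m + 1)) + (a * b) ^ (2 * (m + 1)) *
        (s ^ (2 * (m + 1)))⁻¹) / (b ^ (2 * (m + 1)) - a ^ (2 * (m + 1))) := by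
  rw [Acoef, Bcoef, div_pow, div_pow]
  field_simp
  ring

lemma const_value (a b s : ℝ) (ha : 0 < a) (hab : a < b) (hs₁ : a < s) :
    -A0 a b s - B0 a b s * Real.log s
      = -(Real.log s - Real.log b) ^ 2 / Real.log (a / b) - Real.log b := by
  have hs0 : 0 < s := ha.trans hs₁
  have hb0 : 0 < b := ha.trans hab
  have hL : Real.log a - Real.log b ≠ 0 :=
    sub_ne_zero.mpr (ne_of_lt (Real.log_lt_log ha hab))
  rw [A0, B0, Real.log_div (ne_of_gt ha) (ne_of_gt hs0),
    Real.log_div (ne_of_gt hs0) (ne_of_gt hb0), Real.log_div (ne_of_gt ha) (ne_of_gt hb0)]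
  field_simp
  ring

/-- For every `y = s e^{iα}` in the annulus `A = {a < |x| < b}`, the limit as `x → y`
(`x ∈ A`, `x ≠ y`) of `-log|x - y| - G_A(x, y)` exists and equals the Robin function
`R_A(y)`. -/
theorem robin_function_limit (a b s α : ℝ) (ha : 0 < a) (hab : a < b)
    (hs₁ : a < s) (hs₂ : s < b) :
    Filter.Tendsto
      (fun x : ℂ => -Real.log (‖x - s * Complex.exp (α * Complex.I)‖)
        - GA a b s α x)
      (nhdsWithin (s * Complex.exp (α * Complex.I))
        ({x : ℂ | a < ‖x‖ ∧ ‖x‖ < b} \ {s * Complex.exp (α * Complex.I)}))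
      (nhds (RA a b s)) := by
  have hs0 : 0 < s := ha.trans hs₁
  have hb0 : 0 < b := ha.trans hab
  set y : ℂ := (s : ℂ) * Complex.exp (α * Complex.I) with hy
  have habsy : ‖y‖ = s := by
    rw [hy, norm_mul, Complex.norm_real, Complex.norm_exp_ofReal_mul_I, mul_one, Real.norm_of_nonneg hs0.le]
  -- geometry of the auxiliary radii
  have ha2s : a ^ 2 / s < s := by rw [div_lt_iff₀ hs0]; nlinarith
  have hsb2 : s < b ^ 2 / s := by rw [lt_div_iff₀ hs0]; nlinarith
  set r₁ : ℝ := (a ^ 2 / s + s) / 2 with hr₁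
  set r₂ : ℝ := (s + b ^ 2 / s) / 2 with hr₂
  have hr₁pos : 0 < r₁ := by rw [hr₁]; positivity
  have hr₁lt : r₁ < s := by rw [hr₁]; linarith
  have hr₁gt : a ^ 2 / s < r₁ := by rw [hr₁]; linarith
  have hr₂gt : s < r₂ := by rw [hr₂]; linarith
  have hr₂lt : r₂ < b ^ 2 / s := by rw [hr₂]; linarith
  have hr₂pos : 0 < r₂ := hs0.trans hr₂gt
  have hb2a2 : 0 < b ^ 2 - a ^ 2 := by nlinarith
  set C : ℝ := b ^ 2 / (b ^ 2 - a ^ 2) with hC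
  set q₁ : ℝ := s * r₂ / b ^ 2 with hq₁
  set q₂ : ℝ := a ^ 2 / (s * r₁) with hq₂
  have hq₁0 : 0 ≤ q₁ := by rw [hq₁]; positivity
  have hq₁1 : q₁ < 1 := by
    rw [hq₁, div_lt_one (by positivity)]
    have := (lt_div_iff₀ hs0).mp hr₂lt
    nlinarith
  have hq₂0 : 0 ≤ q₂ := by rw [hq₂]; positivity
  have hq₂1 : q₂ < 1 := by
    rw [hq₂, div_lt_one (by positivity)]
    have := (div_lt_iff₀ hs0).mp hr₁gt
    nlinarith
  -- the set on which we have uniform convergence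
  set S : Set ℂ := {x : ℂ | r₁ ≤ ‖x‖ ∧ ‖x‖ ≤ r₂} with hS
  -- coefficient bounds
  have hDlow : ∀ m : ℕ, b ^ (2 * m) * (b ^ 2 - a ^ 2) ≤ b ^ (2 * (m + 1)) - a ^ (2 * (m + 1)) := by
    intro m
    have h1 : a ^ (2 * m) ≤ b ^ (2 * m) := pow_le_pow_left₀ ha.le hab.le _
    have h2 : a ^ (2 * (m + 1)) = a ^ (2 * m) * a ^ 2 := by ring
    have h3 : b ^ (2 * (m + 1)) = b ^ (2 * m) * b ^ 2 := by ring
    nlinarith [sq_nonneg a, pow_nonneg ha.le (2 * m)]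
  have hDlowpos : ∀ m : ℕ, (0 : ℝ) < b ^ (2 * m) * (b ^ 2 - a ^ 2) :=
    fun m => mul_pos (pow_pos hb0 _) hb2a2
  have hDpos : ∀ m : ℕ, (0 : ℝ) < b ^ (2 * (m + 1)) - a ^ (2 * (m + 1)) :=
    fun m => lt_of_lt_of_le (hDlowpos m) (hDlow m)
  have hAbound : ∀ m : ℕ,
      |Acoef a b s (m + 1)| ≤ s ^ (m + 1) / (b ^ (2 * m) * (b ^ 2 - a ^ 2)) := by
    intro m
    have hnum1 : 0 ≤ s ^ (m + 1) - (a ^ 2 / s) ^ (m + 1) :=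
      sub_nonneg.mpr (pow_le_pow_left₀ (by positivity) ha2s.le _)
    have hnum2 : s ^ (m + 1) - (a ^ 2 / s) ^ (m + 1) ≤ s ^ (m + 1) := by
      have : (0 : ℝ) ≤ (a ^ 2 / s) ^ (m + 1) := by positivity
      linarith
    rw [Acoef, abs_of_nonneg (div_nonneg hnum1 (hDpos m).le)]
    exact div_le_div₀ (by positivity) hnum2 (hDlowpos m) (hDlow m)
  have hBbound : ∀ m : ℕ,
      |Bcoef a b s (m + 1)| ≤ (a ^ 2 * b ^ 2 / s) ^ (m + 1) / (b ^ (2 * m) * (b ^ 2 - a ^ 2)) := by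
    intro m
    have ha2 : (0 : ℝ) ≤ a ^ (2 * (m + 1)) := by positivity
    have hs' : (0 : ℝ) ≤ s ^ (m + 1) := by positivity
    have hnum1 : 0 ≤ a ^ (2 * (m + 1)) * ((b ^ 2 / s) ^ (m + 1) - s ^ (m + 1)) :=
      mul_nonneg ha2 (sub_nonneg.mpr (pow_le_pow_left₀ hs0.le hsb2.le _))
    have he : (a ^ 2 * b ^ 2 / s) ^ (m + 1) = a ^ (2 * (m + 1)) * (b ^ 2 / s) ^ (m + 1) := by
      rw [show a ^ 2 * b ^ 2 / s = a ^ 2 * (b ^ 2 / s) by ring, mul_pow]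
      ring
    have hnum2 : a ^ (2 * (m + 1)) * ((b ^ 2 / s) ^ (m + 1) - s ^ (m + 1))
        ≤ (a ^ 2 * b ^ 2 / s) ^ (m + 1) := by
      rw [he]
      exact mul_le_mul_of_nonneg_left (by linarith) ha2
    rw [Bcoef, abs_of_nonneg (div_nonneg hnum1 (hDpos m).le)]
    exact div_le_div₀ (by positivity) hnum2 (hDlowpos m) (hDlow m)
  -- the uniform majorant
  set u : ℕ → ℝ := fun m => C * q₁ ^ (m + 1) + C * q₂ ^ (m + 1) with hu
  have hsumu : Summable u := by
    apply Summable.add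
    · exact ((summable_geometric_of_lt_one hq₁0 hq₁1).mul_left (C * q₁)).congr
        (fun n => by ring)
    · exact ((summable_geometric_of_lt_one hq₂0 hq₂1).mul_left (C * q₂)).congr
        (fun n => by ring)
  have he1 : ∀ m : ℕ, s ^ (m + 1) / (b ^ (2 * m) * (b ^ 2 - a ^ 2)) * r₂ ^ (m + 1)
      = C * q₁ ^ (m + 1) := by
    intro m
    rw [hC, hq₁]
    exact geom_eq_one a b s r₂ hb0.ne' hb2a2.ne' m
  have he2 : ∀ m : ℕ, (a ^ 2 * b ^ 2 / s) ^ (m + 1) / (b ^ (2 * m) * (b ^ 2 - a ^ 2))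
      * (r₁ ^ (m + 1))⁻¹ = C * q₂ ^ (m + 1) := by
    intro m
    rw [hC, hq₂]
    exact geom_eq_two a b s r₁ hb0.ne' hs0.ne' hr₁pos.ne' hb2a2.ne' m
  -- bound on the terms
  have hbound : ∀ m : ℕ, ∀ x ∈ S, ‖Fterm a b s α m x‖ ≤ u m := by
    intro m x hx
    obtain ⟨hx1, hx2⟩ := hx
    have hxpos : 0 < ‖x‖ := lt_of_lt_of_le hr₁pos hx1
    have hp : |(x ^ (m + 1) * Complex.exp (-((m + 1 : ℝ) * α) * Complex.I)).re|
        ≤ r₂ ^ (m + 1) :=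
      (re_pos_bound m α x).trans (pow_le_pow_left₀ hxpos.le hx2 _)
    have hq : |(x ^ (-(m + 1 : ℤ)) * Complex.exp (((m + 1 : ℝ) * α) * Complex.I)).re|
        ≤ (r₁ ^ (m + 1))⁻¹ := by
      refine (re_neg_bound m α x).trans ?_
      exact inv_anti₀ (by positivity) (pow_le_pow_left₀ hr₁pos.le hx1 _)
    have hone : |1 / ((m : ℝ) + 1)| ≤ 1 := by
      rw [abs_of_pos (by positivity)]
      rw [div_le_one (by positivity)]
      have : (0:ℝ) ≤ (m : ℝ) := Nat.cast_nonneg m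
      linarith
    have key : |Acoef a b s (m + 1) * (x ^ (m + 1)
          * Complex.exp (-((m + 1 : ℝ) * α) * Complex.I)).re
        + Bcoef a b s (m + 1) * (x ^ (-(m + 1 : ℤ))
          * Complex.exp (((m + 1 : ℝ) * α) * Complex.I)).re| ≤ u m := by
      refine (abs_add_le _ _).trans ?_
      rw [abs_mul, abs_mul, hu]
      have t1 : |Acoef a b s (m + 1)|
          * |(x ^ (m + 1) * Complex.exp (-((m + 1 : ℝ) * α) * Complex.I)).re|
          ≤ C * q₁ ^ (m + 1) := by
        rw [← he1 m]
        exact mul_le_mul (hAbound m) hp (abs_nonneg _) (by positivity)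
      have t2 : |Bcoef a b s (m + 1)|
          * |(x ^ (-(m + 1 : ℤ)) * Complex.exp (((m + 1 : ℝ) * α) * Complex.I)).re|
          ≤ C * q₂ ^ (m + 1) := by
        rw [← he2 m]
        exact mul_le_mul (hBbound m) hq (abs_nonneg _) (by positivity)
      exact add_le_add t1 t2
    calc ‖Fterm a b s α m x‖
        = |1 / ((m : ℝ) + 1)| * |Acoef a b s (m + 1) * (x ^ (m + 1)
            * Complex.exp (-((m + 1 : ℝ) * α) * Complex.I)).re
          + Bcoef a b s (m + 1) * (x ^ (-(m + 1 : ℤ))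
            * Complex.exp (((m + 1 : ℝ) * α) * Complex.I)).re| := by
          rw [Fterm, Real.norm_eq_abs, abs_mul]
      _ ≤ 1 * u m := by
          apply mul_le_mul hone key (abs_nonneg _) (by norm_num)
      _ = u m := one_mul _
  -- continuity of the terms
  have hcontF : ∀ m : ℕ, ContinuousOn (Fterm a b s α m) S := by
    intro m x hx
    have hx0 : x ≠ 0 := by
      intro h
      rw [h] at hx
      simp only [hS, Set.mem_setOf_eq, norm_zero] at hx
      linarith [hx.1]
    apply ContinuousAt.continuousWithinAt
    apply ContinuousAt.mul continuousAt_const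
    apply ContinuousAt.add
    · apply ContinuousAt.mul continuousAt_const
      exact Complex.continuous_re.continuousAt.comp
        ((continuousAt_id.pow (m + 1)).mul continuousAt_const)
    · apply ContinuousAt.mul continuousAt_const
      exact Complex.continuous_re.continuousAt.comp
        ((continuousAt_zpow₀ x _ (Or.inl hx0)).mul continuousAt_const)
  have hTcont : ContinuousOn (fun x : ℂ => ∑' m : ℕ, Fterm a b s α m x) S :=
    continuousOn_tsum hcontF hsumu hbound
  -- S is a neighbourhood of y
  have hSnhds : S ∈ nhds y := by
    have hopen : IsOpen {x : ℂ | r₁ < ‖x‖ ∧ ‖x‖ < r₂} := by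
      have : {x : ℂ | r₁ < ‖x‖ ∧ ‖x‖ < r₂}
          = (fun x : ℂ => ‖x‖) ⁻¹' (Set.Ioo r₁ r₂) := rfl
      rw [this]
      exact isOpen_Ioo.preimage continuous_norm
    refine Filter.mem_of_superset (hopen.mem_nhds ?_) (fun x hx => ⟨hx.1.le, hx.2.le⟩)
    exact ⟨by rw [habsy]; exact hr₁lt, by rw [habsy]; exact hr₂gt⟩
  -- the limit function
  have hH : ContinuousAt (fun x : ℂ => -A0 a b s - B0 a b s * Real.log ‖x‖
      + ∑' m : ℕ, Fterm a b s α m x) y := by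
    apply ContinuousAt.add
    · apply ContinuousAt.sub continuousAt_const
      apply ContinuousAt.mul continuousAt_const
      exact (Real.continuousAt_log (by rw [habsy]; exact hs0.ne')).comp
        continuous_norm.continuousAt
    · exact hTcont.continuousAt hSnhds
  -- identification of the functions
  have hfun : (fun x : ℂ => -Real.log ‖x - y‖ - GA a b s α x)
      = fun x : ℂ => -A0 a b s - B0 a b s * Real.log ‖x‖
        + ∑' m : ℕ, Fterm a b s α m x := by
    funext x
    rw [GA_eq, ← hy]
    ring
  -- value at the pole
  have hterm : ∀ m : ℕ, Fterm a b s α m y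
      = (1 / (m + 1 : ℝ)) *
        ((s ^ (2 * (m + 1)) - 2 * a ^ (2 * (m + 1)) + (a * b) ^ (2 * (m + 1)) *
          (s ^ (2 * (m + 1)))⁻¹) / (b ^ (2 * (m + 1)) - a ^ (2 * (m + 1)))) := by
    intro m
    rw [Fterm, hy, pole_re_pos, pole_re_neg]
    exact congrArg (fun t => (1 / (m + 1 : ℝ)) * t)
      (term_value a b s m hs0.ne' (hDpos m).ne')
  have hconst : -A0 a b s - B0 a b s * Real.log s
      = -(Real.log s - Real.log b) ^ 2 / Real.log (a / b) - Real.log b :=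
    const_value a b s ha hab hs₁
  have hval : -A0 a b s - B0 a b s * Real.log ‖y‖
      + ∑' m : ℕ, Fterm a b s α m y = RA a b s := by
    rw [habsy, tsum_congr hterm, RA, hconst]
  rw [hfun, ← hval]
  exact hH.continuousWithinAt
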